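/- Let $p$ be a probability mass function on a finite set $\mathcal{C}$, $\bar g : \mathcal{C} \to \mathbb{R}$, and let $w = p$ (the optimal proposal). For i.i.d. samples $C^{(1)},\dots,C^{(N)}$ from a proposal $q$ with weights as in Theorem 2, if $q$ satisfies $q = \pi_0$ (the prior) and the posterior equals the point mass $\delta_{C^{tr}}$ with $C^{tr} \sim \pi_0$, then the MSE of the importance sampling estimator of $\mathbb{E}[\bar g]$, averaged over $C^{tr}$, is at least $\frac{1}{N}\mathrm{Var}_{\pi_0}(\bar g) \cdot |\mathcal{C}| \cdot \min_C \pi_0(C) \cdot \frac{1}{\max_C \pi_0(C)}$; in the uniform-prior case $\pi_0(C) = 1/|\mathcal{C}|$, the averaged MSE equals $\frac{1}{N}\big(|\mathcal{C}|\,\mathbb{E}_{\pi_0}[\bar g^2] - (\mathbb{E}_{\pi_0}[\bar g])^2\big) \ge \frac{|\mathcal{C}|}{N}\mathrm{Var}_{\pi_0}(\bar g)$. -/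

import Mathlib

open Classical

/-- Specialization of the exponential-MSE lower bound to the uniform prior:
with prior and proposal uniform over `𝒞` and the posterior equal to the point
mass at a uniformly random true hypothesis `C^{tr}`, the MSE of the
importance-sampling estimator, averaged over `C^{tr}`, equals
`(1/N)(|𝒞|·E_u[ḡ²] − (E_u[ḡ])²)`, which is at least `(|𝒞|/N)·Var_u(ḡ)`. -/
theorem stmt_13 {𝒞 : Type*} [Fintype 𝒞] [Nonempty 𝒞]
    (gbar : 𝒞 → ℝ) (N : ℕ) (hN : 0 < N)
    (u : 𝒞 → ℝ) (hu : u = fun _ => (1 : ℝ) / Fintype.card 𝒞) :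
    (∑ Ctr : 𝒞, u Ctr *
        ((1 / (N : ℝ)) *
          ((∑ C : 𝒞, (if C = Ctr then (1 : ℝ) else 0) ^ 2 / u C * gbar C ^ 2)
            - (∑ C : 𝒞, u C * gbar C) ^ 2))
      = (1 / (N : ℝ)) *
          ((Fintype.card 𝒞 : ℝ) * (∑ C : 𝒞, u C * gbar C ^ 2)
            - (∑ C : 𝒞, u C * gbar C) ^ 2)) ∧
    ((Fintype.card 𝒞 : ℝ) / (N : ℝ) *
        (∑ C : 𝒞, u C * (gbar C - ∑ C', u C' * gbar C') ^ 2)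
      ≤ (1 / (N : ℝ)) *
          ((Fintype.card 𝒞 : ℝ) * (∑ C : 𝒞, u C * gbar C ^ 2)
            - (∑ C : 𝒞, u C * gbar C) ^ 2)) := by
  subst hu
  simp only
  set k : ℝ := (Fintype.card 𝒞 : ℝ) with hk
  have hkpos : (0 : ℝ) < k := by rw [hk]; exact_mod_cast Fintype.card_pos
  have hkne : k ≠ 0 := ne_of_gt hkpos
  have hk1 : (1 : ℝ) ≤ k := by
    rw [hk]; exact_mod_cast Fintype.card_pos
  have hNpos : (0 : ℝ) < (N : ℝ) := by exact_mod_cast hN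
  set T : ℝ := ∑ C : 𝒞, gbar C with hT
  set Q : ℝ := ∑ C : 𝒞, gbar C ^ 2 with hQ
  have hSe : (∑ C : 𝒞, (1 : ℝ) / k * gbar C) = 1 / k * T := by
    rw [hT, Finset.mul_sum]
  have hE2 : (∑ C : 𝒞, (1 : ℝ) / k * gbar C ^ 2) = 1 / k * Q := by
    rw [hQ, Finset.mul_sum]
  have hdelta : ∀ Ctr : 𝒞,
      (∑ C : 𝒞, (if C = Ctr then (1 : ℝ) else 0) ^ 2 / ((1 : ℝ) / k) * gbar C ^ 2)
        = k * gbar Ctr ^ 2 := by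
    intro Ctr
    rw [show (∑ C : 𝒞, (if C = Ctr then (1 : ℝ) else 0) ^ 2 / ((1 : ℝ) / k) * gbar C ^ 2)
        = ∑ C : 𝒞, (if C = Ctr then k * gbar C ^ 2 else 0) from
      Finset.sum_congr rfl (fun C _ => by split_ifs <;> field_simp <;> simp)]
    simp
  constructor
  · rw [hSe, hE2]
    have l1 : (∑ Ctr : 𝒞, (1 : ℝ) / k *
        ((1 / (N : ℝ)) *
          ((∑ C : 𝒞, (if C = Ctr then (1 : ℝ) else 0) ^ 2 / ((1 : ℝ) / k) * gbar C ^ 2)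
            - (1 / k * T) ^ 2)))
        = ∑ Ctr : 𝒞, ((1 / (N : ℝ)) * gbar Ctr ^ 2
            - 1 / (k * (N : ℝ)) * (1 / k * T) ^ 2) := by
      refine Finset.sum_congr rfl (fun Ctr _ => ?_)
      rw [hdelta Ctr]
      field_simp
    rw [l1, Finset.sum_sub_distrib, ← Finset.mul_sum, ← hQ, Finset.sum_const,
      Finset.card_univ, nsmul_eq_mul, ← hk]
    field_simp
  · rw [hSe, hE2]
    have hvar : (∑ C : 𝒞, (1 : ℝ) / k * (gbar C - 1 / k * T) ^ 2)
        = 1 / k * (Q - 2 * (1 / k * T) * T + k * (1 / k * T) ^ 2) := by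
      rw [← Finset.mul_sum]
      congr 1
      rw [Finset.sum_congr rfl (fun C _ => show (gbar C - 1 / k * T) ^ 2
          = gbar C ^ 2 - 2 * (1 / k * T) * gbar C + (1 / k * T) ^ 2 from by ring),
        Finset.sum_add_distrib, Finset.sum_sub_distrib, ← Finset.mul_sum, ← hQ, ← hT,
        Finset.sum_const, Finset.card_univ, nsmul_eq_mul, ← hk]
      try ring
    rw [hvar]
    have key : (1 / k * T) ^ 2 ≤ T ^ 2 / k := by
      have h2 : (1 / k * T) ^ 2 = T ^ 2 / k ^ 2 := by
        field_simp
      rw [h2, div_le_div_iff₀ (by positivity) hkpos]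
      nlinarith [mul_nonneg (mul_nonneg (sq_nonneg T) hkpos.le) (sub_nonneg.2 hk1)]
    have e1 : k / (N : ℝ) * (1 / k * (Q - 2 * (1 / k * T) * T + k * (1 / k * T) ^ 2))
        = 1 / (N : ℝ) * (Q - T ^ 2 / k) := by
      field_simp
      ring
    have e2 : 1 / (N : ℝ) * (k * (1 / k * Q) - (1 / k * T) ^ 2)
        = 1 / (N : ℝ) * (Q - (1 / k * T) ^ 2) := by
      field_simp
    rw [e1, e2]
    have : Q - T ^ 2 / k ≤ Q - (1 / k * T) ^ 2 := by linarith [key]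
    exact mul_le_mul_of_nonneg_left this (by positivity)
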